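/- Let G be a profinite group, U an open normal subgroup, and M a family of open normal subgroups H of G such that H ⊆ U and U/H is a minimal nontrivial normal subgroup of G/H. Then there exists a subset N ⊆ M such that the natural homomorphism U → ∏_{H ∈ N} U/H is surjective with kernel equal to ⋂_{H ∈ M} H. -/

import Mathlib

/-- The "independence" predicate: every finite subfamily map is surjective. -/
def stmt5Good {G : Type*} [Group G] (U : Subgroup G) {ι : Type*} (Hfam : ι → Subgroup G)
    (N : Set ι) : Prop :=
  ∀ F : Finset ι, ↑F ⊆ N → ∀ y : ∀ i : ι, U ⧸ (Hfam i).subgroupOf U,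
    ∃ u : U, ∀ i ∈ F, (QuotientGroup.mk u : U ⧸ (Hfam i).subgroupOf U) = y i

lemma stmt5_finset_chain {α : Type*} {c : Set (Set α)} (hc : IsChain (· ⊆ ·) c)
    (hne : c.Nonempty) (F : Finset α) (hF : ↑F ⊆ ⋃₀ c) : ∃ s ∈ c, ↑F ⊆ s := by
  classical
  induction F using Finset.induction with
  | empty => exact ⟨hne.choose, hne.choose_spec, by simp⟩
  | @insert a F ha ih =>
    obtain ⟨s, hs, hsF⟩ := ih (by
      intro x hx
      apply hF
      simp only [Finset.coe_insert, Set.mem_insert_iff]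
      exact Or.inr hx)
    obtain ⟨t, ht, hat⟩ := hF (by
      simp only [Finset.coe_insert, Set.mem_insert_iff]
      exact Or.inl rfl)
    rcases eq_or_ne s t with rfl | hst
    · exact ⟨s, hs, by intro x hx; rcases Finset.mem_insert.1 hx with rfl | hx
                       exacts [hat, hsF hx]⟩
    · rcases hc hs ht hst with h | h
      · exact ⟨t, ht, by intro x hx; rcases Finset.mem_insert.1 hx with rfl | hx
                         exacts [hat, h (hsF hx)]⟩
      · exact ⟨s, hs, by intro x hx; rcases Finset.mem_insert.1 hx with rfl | hx
                         exacts [h hat, hsF hx]⟩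

lemma stmt5_extend {G : Type*} [Group G] (U : Subgroup G) {ι : Type*} (Hfam : ι → Subgroup G)
    [hnormal : ∀ i, (Hfam i).Normal]
    {N : Set ι} (hN : stmt5Good U Hfam N) (j : ι)
    (hfull : ∀ F : Finset ι, ↑F ⊆ N → ∀ u ∈ U,
      ∃ l ∈ (⨅ i ∈ F, Hfam i) ⊓ U, l⁻¹ * u ∈ Hfam j) :
    stmt5Good U Hfam (insert j N) := by
  classical
  intro F' hF' y
  set F : Finset ι := F'.erase j with hFdef
  have hFN : ↑F ⊆ N := by
    intro i hi
    have hi' := Finset.mem_erase.1 hi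
    rcases hF' hi'.2 with rfl | h
    · exact absurd rfl hi'.1
    · exact h
  obtain ⟨u, hu⟩ := hN F hFN y
  by_cases hj : j ∈ F'
  · obtain ⟨v, hv⟩ := QuotientGroup.mk_surjective (y j)
    obtain ⟨l, hl, hlj⟩ := hfull F hFN ((u⁻¹ * v : U) : G) (u⁻¹ * v).2
    have hlU : l ∈ U := hl.2
    set k : U := ⟨l, hlU⟩ with hk
    have hkF : ∀ i ∈ F, k ∈ (Hfam i).subgroupOf U := by
      intro i hi
      have : l ∈ ⨅ i ∈ F, Hfam i := hl.1
      simp only [Subgroup.mem_iInf] at this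
      exact this i hi
    have hkj : (QuotientGroup.mk k : U ⧸ (Hfam j).subgroupOf U) =
        QuotientGroup.mk (u⁻¹ * v) := by
      rw [QuotientGroup.eq]
      show ((k⁻¹ * (u⁻¹ * v) : U) : G) ∈ Hfam j
      simpa using hlj
    refine ⟨u * k, ?_⟩
    intro i hi
    rcases eq_or_ne i j with rfl | hij
    · have : (QuotientGroup.mk (u * k) : U ⧸ (Hfam i).subgroupOf U) =
          QuotientGroup.mk u * QuotientGroup.mk k := rfl
      rw [this, hkj, ← QuotientGroup.mk_mul]
      simpa using hv
    · have hiF : i ∈ F := Finset.mem_erase.2 ⟨hij, hi⟩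
      have : (QuotientGroup.mk (u * k) : U ⧸ (Hfam i).subgroupOf U) =
          QuotientGroup.mk u * QuotientGroup.mk k := rfl
      rw [this, (QuotientGroup.eq_one_iff k).2 (hkF i hiF), mul_one]
      exact hu i hiF
  · refine ⟨u, fun i hi => hu i ?_⟩
    exact Finset.mem_erase.2 ⟨fun h => hj (h ▸ hi), hi⟩

theorem stmt_5 {G : Type*} [Group G] [TopologicalSpace G] [IsTopologicalGroup G]
    [CompactSpace G] [TotallyDisconnectedSpace G] [T2Space G]
    (U : Subgroup G) [U.Normal] (hUopen : IsOpen (U : Set G))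
    {ι : Type*} (Hfam : ι → Subgroup G) (hinj : Function.Injective Hfam)
    [hnormal : ∀ i, (Hfam i).Normal]
    (hopen : ∀ i, IsOpen ((Hfam i : Subgroup G) : Set G))
    (hle : ∀ i, Hfam i ≤ U)
    (hmin : ∀ i,
      U.map (QuotientGroup.mk' (Hfam i)) ≠ ⊥ ∧
      ∀ K : Subgroup (G ⧸ Hfam i), K.Normal → K ≤ U.map (QuotientGroup.mk' (Hfam i)) →
        K = ⊥ ∨ K = U.map (QuotientGroup.mk' (Hfam i))) :
    ∃ N : Set ι,
      ∃ f : U →* ∀ i : N, U ⧸ ((Hfam i).subgroupOf U),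
        (∀ (u : U) (i : N), f u i = QuotientGroup.mk u) ∧
        Function.Surjective f ∧
        f.ker = ⨅ i : ι, (Hfam i).subgroupOf U := by
  classical
  -- the subgroups L F
  set L : Finset ι → Subgroup G := fun F => (⨅ i ∈ F, Hfam i) ⊓ U with hLdef
  have hLnormal : ∀ F, (L F).Normal := by
    intro F
    constructor
    intro x hx g
    rcases Subgroup.mem_inf.1 hx with ⟨hx1, hx2⟩
    refine Subgroup.mem_inf.2 ⟨?_, ‹U.Normal›.conj_mem x hx2 g⟩
    refine Subgroup.mem_iInf.2 fun i => Subgroup.mem_iInf.2 fun hi => ?_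
    have hx1' : x ∈ Hfam i := Subgroup.mem_iInf.1 (Subgroup.mem_iInf.1 hx1 i) hi
    exact (hnormal i).conj_mem x hx1' g
  -- the dichotomy from minimality
  have dicho : ∀ (F : Finset ι) (j : ι),
      L F ≤ Hfam j ∨ ∀ u ∈ U, ∃ l ∈ L F, l⁻¹ * u ∈ Hfam j := by
    intro F j
    have hmap : ((L F).map (QuotientGroup.mk' (Hfam j))).Normal :=
      (hLnormal F).map _ (QuotientGroup.mk'_surjective _)
    have hmaple : (L F).map (QuotientGroup.mk' (Hfam j)) ≤
        U.map (QuotientGroup.mk' (Hfam j)) :=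
      Subgroup.map_mono inf_le_right
    rcases (hmin j).2 _ hmap hmaple with h | h
    · left
      intro l hl
      have : QuotientGroup.mk' (Hfam j) l ∈ (⊥ : Subgroup (G ⧸ Hfam j)) :=
        h ▸ Subgroup.mem_map_of_mem _ hl
      rw [Subgroup.mem_bot] at this
      have : l ∈ (QuotientGroup.mk' (Hfam j)).ker := this
      rwa [QuotientGroup.ker_mk'] at this
    · right
      intro u hu
      have : QuotientGroup.mk' (Hfam j) u ∈ (L F).map (QuotientGroup.mk' (Hfam j)) :=
        h ▸ Subgroup.mem_map_of_mem _ hu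
      obtain ⟨l, hl, hlu⟩ := this
      refine ⟨l, hl, ?_⟩
      have : (l : G ⧸ Hfam j) = u := hlu
      rwa [QuotientGroup.eq] at this
  -- Zorn
  obtain ⟨m, hm⟩ : ∃ m, Maximal (· ∈ {N | stmt5Good U Hfam N}) m := by
    apply zorn_subset
    intro c hcS hc
    rcases c.eq_empty_or_nonempty with rfl | hne
    · refine ⟨∅, ?_, fun s hs => absurd hs (Set.notMem_empty s)⟩
      intro F hF y
      exact ⟨1, fun i hi => absurd (hF hi) (Set.notMem_empty i)⟩
    · refine ⟨⋃₀ c, ?_, fun s hs => Set.subset_sUnion_of_mem hs⟩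
      intro F hF y
      obtain ⟨s, hs, hFs⟩ := stmt5_finset_chain hc hne F hF
      exact hcS hs F hFs y
  have hmgood : stmt5Good U Hfam m := hm.1
  -- key : the kernel over m is contained in every subgroupOf
  have key : ∀ j : ι, (⨅ i : m, (Hfam (i : ι)).subgroupOf U) ≤ (Hfam j).subgroupOf U := by
    intro j
    by_cases hc : ∃ F : Finset ι, ↑F ⊆ m ∧ L F ≤ Hfam j
    · obtain ⟨F, hFm, hFj⟩ := hc
      intro u hu
      have hu' := Subgroup.mem_iInf.1 hu
      have huF : (u : G) ∈ L F := by
        refine Subgroup.mem_inf.2 ⟨?_, u.2⟩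
        exact Subgroup.mem_iInf.2 fun i => Subgroup.mem_iInf.2 fun hi => hu' ⟨i, hFm hi⟩
      exact hFj huF
    · push_neg at hc
      have hfull : ∀ F : Finset ι, ↑F ⊆ m → ∀ u ∈ U, ∃ l ∈ L F, l⁻¹ * u ∈ Hfam j := by
        intro F hFm
        rcases dicho F j with h | h
        · exact absurd h (hc F hFm)
        · exact h
      have hgood' : stmt5Good U Hfam (insert j m) := stmt5_extend U Hfam hmgood j hfull
      have hjm : j ∈ m := by
        have := hm.2 hgood' (Set.subset_insert j m)
        exact this (Set.mem_insert j m)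
      exact iInf_le _ (⟨j, hjm⟩ : m)
  -- topology facts
  have hUclosed : IsClosed (U : Set G) := Subgroup.isClosed_of_isOpen U hUopen
  haveI : CompactSpace U := isCompact_iff_compactSpace.1 hUclosed.isCompact
  have hopen' : ∀ i : ι, IsOpen (((Hfam i).subgroupOf U : Subgroup U) : Set U) := by
    intro i
    have : (((Hfam i).subgroupOf U : Subgroup U) : Set U) =
        Subtype.val ⁻¹' (Hfam i : Set G) := by
      ext u; exact Subgroup.mem_subgroupOf
    rw [this]
    exact (hopen i).preimage continuous_subtype_val
  have hclosed' : ∀ i : ι, IsClosed (((Hfam i).subgroupOf U : Subgroup U) : Set U) :=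
    fun i => Subgroup.isClosed_of_isOpen _ (hopen' i)
  -- define f
  refine ⟨m, { toFun := fun u i => QuotientGroup.mk u,
               map_one' := rfl, map_mul' := fun a b => rfl }, fun u i => rfl, ?_, ?_⟩
  · -- surjectivity
    intro y
    set A : Finset m → Set U := fun F =>
      {u : U | ∀ i ∈ F, (QuotientGroup.mk u : U ⧸ (Hfam (i : ι)).subgroupOf U) = y i}
      with hA
    have hAclosed : ∀ F, IsClosed (A F) := by
      intro F
      have : A F = ⋂ i ∈ F, {u : U |
          (QuotientGroup.mk u : U ⧸ (Hfam (i : ι)).subgroupOf U) = y i} := by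
        ext u; simp [hA, Set.mem_iInter]
      rw [this]
      refine isClosed_biInter fun i _ => ?_
      obtain ⟨v, hv⟩ := QuotientGroup.mk_surjective (y i)
      have : {u : U | (QuotientGroup.mk u : U ⧸ (Hfam (i : ι)).subgroupOf U) = y i} =
          (fun u : U => u⁻¹ * v) ⁻¹' (((Hfam (i : ι)).subgroupOf U : Subgroup U) : Set U) := by
        ext u
        simp only [Set.mem_setOf_eq, Set.mem_preimage, SetLike.mem_coe]
        rw [← hv, QuotientGroup.eq]
      rw [this]
      exact (hclosed' i).preimage (continuous_inv.mul continuous_const)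
    have hAne : ∀ F, (A F).Nonempty := by
      intro F
      obtain ⟨u, hu⟩ := hmgood (F.image Subtype.val)
        (by intro i hi; simp only [Finset.coe_image, Set.mem_image, Finset.mem_coe] at hi
            obtain ⟨⟨i', hi'⟩, _, rfl⟩ := hi; exact hi')
        (fun i => if h : i ∈ m then y ⟨i, h⟩ else 1)
      refine ⟨u, fun i hi => ?_⟩
      have := hu (i : ι) (Finset.mem_image_of_mem _ hi)
      simpa only [dif_pos i.2, Subtype.coe_eta] using this
    have hdir : Directed (· ⊇ ·) A := by
      intro F F'
      refine ⟨F ∪ F', fun u hu i hi => hu i (Finset.mem_union_left _ hi),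
        fun u hu i hi => hu i (Finset.mem_union_right _ hi)⟩
    obtain ⟨u, hu⟩ := IsCompact.nonempty_iInter_of_directed_nonempty_isCompact_isClosed
      A hdir hAne (fun F => (hAclosed F).isCompact) hAclosed
    refine ⟨u, ?_⟩
    funext i
    have := Set.mem_iInter.1 hu {i}
    exact this i (Finset.mem_singleton_self i)
  · -- kernel
    apply le_antisymm
    · intro u hu
      rw [MonoidHom.mem_ker] at hu
      have hu' : ∀ i : m, (QuotientGroup.mk u : U ⧸ (Hfam (i : ι)).subgroupOf U) = 1 :=
        fun i => congrFun hu i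
      refine Subgroup.mem_iInf.2 fun j => ?_
      have : u ∈ ⨅ i : m, (Hfam (i : ι)).subgroupOf U :=
        Subgroup.mem_iInf.2 fun i => (QuotientGroup.eq_one_iff u).1 (hu' i)
      exact key j this
    · intro u hu
      rw [MonoidHom.mem_ker]
      funext i
      exact (QuotientGroup.eq_one_iff u).2 (Subgroup.mem_iInf.1 hu i)
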